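/- Let M be a minimal submanifold of dimension n in a Riemannian manifold (N, g̃) with concurrent vector field V, and suppose (M, g, V^T, φ) is a conformal soliton. Then φ ≡ 1. -/

import Mathlib

/-- Abstract data of a Riemannian manifold: points `M`, a space `VF` of (smooth) vector
fields, the action of vector fields on functions, the metric, the Levi-Civita
connection and the Lie bracket, with their defining properties. -/
structure RiemannianVF (M : Type*) (VF : Type*) [AddCommGroup VF] [Module ℝ VF] where
  act : VF → (M → ℝ) → (M → ℝ)
  g : VF → VF → M → ℝ
  conn : VF → VF → VF
  bracket : VF → VF → VF
  g_symm : ∀ X Y, g X Y = g Y X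
  g_add_left : ∀ X Y Z, g (X + Y) Z = g X Z + g Y Z
  g_smul_left : ∀ (c : ℝ) (X Z), g (c • X) Z = c • g X Z
  g_nonneg : ∀ X p, 0 ≤ g X X p
  nondeg : ∀ X, (∀ Z, g X Z = 0) → X = 0
  act_add : ∀ X (u v : M → ℝ), act X (u + v) = act X u + act X v
  compat : ∀ X Y Z, act X (g Y Z) = g (conn X Y) Z + g Y (conn X Z)
  torsion_free : ∀ X Y, conn X Y - conn Y X = bracket X Y

namespace RiemannianVF

variable {M VF : Type*} [AddCommGroup VF] [Module ℝ VF]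

/-- Lie derivative of the metric along `v`:
`(L_v g)(X,Y) = v(g(X,Y)) - g([v,X],Y) - g(X,[v,Y])`. -/
def lieDeriv (R : RiemannianVF M VF) (v X Y : VF) : M → ℝ :=
  R.act v (R.g X Y) - R.g (R.bracket v X) Y - R.g X (R.bracket v Y)

/-- `v` is the gradient of `f`: `g(v, X) = X f` for every vector field `X`. -/
def IsGradient (R : RiemannianVF M VF) (v : VF) (f : M → ℝ) : Prop :=
  ∀ X, R.g v X = R.act X f

/-- Hessian: `(∇∇ f)(X,Y) = X(Y f) - (∇_X Y) f`. -/
def hess (R : RiemannianVF M VF) (f : M → ℝ) (X Y : VF) : M → ℝ :=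
  R.act X (R.act Y f) - R.act (R.conn X Y) f

/-- Riemann curvature: `Rm(X,Y)Z = ∇_X ∇_Y Z - ∇_Y ∇_X Z - ∇_[X,Y] Z`. -/
def curv (R : RiemannianVF M VF) (X Y Z : VF) : VF :=
  R.conn X (R.conn Y Z) - R.conn Y (R.conn X Z) - R.conn (R.bracket X Y) Z

/-- `e` is a (global) orthonormal frame. -/
def IsONFrame (R : RiemannianVF M VF) {n : ℕ} (e : Fin n → VF) : Prop :=
  ∀ i j, R.g (e i) (e j) = fun _ => if i = j then (1 : ℝ) else 0

/-- Ricci tensor: `Ric(X,Y) = Σᵢ g(Rm(eᵢ,X)Y, eᵢ)`. -/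
def ricci (R : RiemannianVF M VF) {n : ℕ} (e : Fin n → VF) (X Y : VF) : M → ℝ :=
  ∑ i, R.g (R.curv (e i) X Y) (e i)

/-- Scalar curvature: trace of the Ricci tensor. -/
def scal (R : RiemannianVF M VF) {n : ℕ} (e : Fin n → VF) : M → ℝ :=
  ∑ i, R.ricci e (e i) (e i)

/-- Laplace–Beltrami operator: trace of the Hessian. -/
def laplacian (R : RiemannianVF M VF) {n : ℕ} (e : Fin n → VF) (f : M → ℝ) : M → ℝ :=
  ∑ i, R.hess f (e i) (e i)

/-- Covariant derivative of a one-form: `(∇_X ω)(Y) = X(ω(Y)) - ω(∇_X Y)`. -/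
def covDerivOneForm (R : RiemannianVF M VF) (ω : VF → M → ℝ) (X Y : VF) : M → ℝ :=
  R.act X (ω Y) - ω (R.conn X Y)

/-- Second covariant derivative of a one-form. -/
def covDeriv2OneForm (R : RiemannianVF M VF) (ω : VF → M → ℝ) (X Y Z : VF) : M → ℝ :=
  R.act X (R.covDerivOneForm ω Y Z) - R.covDerivOneForm ω (R.conn X Y) Z
    - R.covDerivOneForm ω Y (R.conn X Z)

/-- Connection (rough) Laplacian on one-forms: trace of the second covariant derivative. -/
def roughLapOneForm (R : RiemannianVF M VF) {n : ℕ} (e : Fin n → VF) (ω : VF → M → ℝ)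
    (X : VF) : M → ℝ :=
  ∑ i, R.covDeriv2OneForm ω (e i) (e i) X

end RiemannianVF

/-- A submanifold `M` of an ambient Riemannian manifold: `VF` are ambient vector
fields along `M`, `T` is the orthogonal projection onto the tangent bundle of `M`. -/
structure SubmanifoldVF (M : Type*) (VF : Type*) [AddCommGroup VF] [Module ℝ VF]
    extends RiemannianVF M VF where
  T : VF →ₗ[ℝ] VF
  T_proj : ∀ X, T (T X) = T X
  T_orth : ∀ X Y, g (T X) (Y - T Y) = 0
  bracket_tangent : ∀ X Y, T X = X → T Y = Y → T (bracket X Y) = bracket X Y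

namespace SubmanifoldVF

variable {M VF : Type*} [AddCommGroup VF] [Module ℝ VF]

/-- Normal component of an ambient vector field along `M`. -/
def nor (S : SubmanifoldVF M VF) (X : VF) : VF := X - S.T X

/-- Shape operator `A_η` in a normal direction `η` (Weingarten: tangential part of `-∇̃_X η`). -/
def shape (S : SubmanifoldVF M VF) (η X : VF) : VF := - S.T (S.conn X η)

/-- Second fundamental form: normal component of `∇̃_X Y`. -/
def secondFF (S : SubmanifoldVF M VF) (X Y : VF) : VF := S.conn X Y - S.T (S.conn X Y)

/-- Hessian on `M` with respect to the induced connection `∇_X Y = (∇̃_X Y)^T`. -/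
def hessInduced (S : SubmanifoldVF M VF) (f : M → ℝ) (X Y : VF) : M → ℝ :=
  S.act X (S.act Y f) - S.act (S.T (S.conn X Y)) f

/-- Laplace–Beltrami operator of `M` with respect to a tangent orthonormal frame. -/
def lapInduced (S : SubmanifoldVF M VF) {n : ℕ} (e : Fin n → VF) (f : M → ℝ) : M → ℝ :=
  ∑ i, S.hessInduced f (e i) (e i)

/-- `(M, g, v, φ)` is a conformal soliton: `φ g = (1/2) L_v g` on tangent vector fields. -/
def IsConformalSoliton (S : SubmanifoldVF M VF) (v : VF) (φ : M → ℝ) : Prop :=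
  ∀ X Y, S.T X = X → S.T Y = Y →
    (fun p => φ p * S.g X Y p) = fun p => (1 / 2) * S.toRiemannianVF.lieDeriv v X Y p

end SubmanifoldVF

section Aux

variable {M VF : Type*} [AddCommGroup VF] [Module ℝ VF]

lemma RiemannianVF.g_zero_left (R : RiemannianVF M VF) (Z : VF) : R.g 0 Z = 0 := by
  have h := R.g_smul_left 0 0 Z
  simpa using h

lemma RiemannianVF.g_zero_right (R : RiemannianVF M VF) (X : VF) : R.g X 0 = 0 := by
  rw [R.g_symm]; exact R.g_zero_left X

lemma RiemannianVF.g_add_right (R : RiemannianVF M VF) (X Y Z : VF) :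
    R.g X (Y + Z) = R.g X Y + R.g X Z := by
  rw [R.g_symm, R.g_add_left, R.g_symm Y X, R.g_symm Z X]

lemma RiemannianVF.g_sub_left (R : RiemannianVF M VF) (X Y Z : VF) :
    R.g (X - Y) Z = R.g X Z - R.g Y Z := by
  have h : X - Y = X + (-1 : ℝ) • Y := by
    rw [neg_one_smul]; abel
  rw [h, R.g_add_left, R.g_smul_left]
  funext p
  simp
  ring

lemma RiemannianVF.g_sum_right (R : RiemannianVF M VF) (X : VF) {ι : Type*}
    (s : Finset ι) (Y : ι → VF) :
    R.g X (∑ i ∈ s, Y i) = ∑ i ∈ s, R.g X (Y i) := by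
  classical
  induction s using Finset.induction with
  | empty => simp [R.g_zero_right]
  | insert _ _ h ih =>
      rw [Finset.sum_insert h, Finset.sum_insert h, R.g_add_right, ih]

end Aux

/-- a conformal soliton `(M, g, V^T, φ)` on a minimal submanifold of
dimension `n` of an ambient manifold with concurrent vector field `V` has `φ ≡ 1`. -/
theorem minimal_soliton_phi_eq_one {M VF : Type*} [AddCommGroup VF] [Module ℝ VF]
    (S : SubmanifoldVF M VF) (V : VF) (φ : M → ℝ) (n : ℕ) (hn : 1 ≤ n)
    (e : Fin n → VF) (he : S.toRiemannianVF.IsONFrame e)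
    (htang : ∀ i, S.T (e i) = e i)
    (hmin : ∑ i, S.secondFF (e i) (e i) = 0)
    (hV : ∀ X, S.T X = X → S.conn X V = X)
    (hsol : S.IsConformalSoliton (S.T V) φ) :
    ∀ p, φ p = 1 := by
  classical
  set ν := V - S.T V with hνdef
  have hVsum : V = S.T V + ν := by rw [hνdef]; abel
  have hgν' : ∀ W, S.g ν (S.T W) = 0 := fun W => by
    rw [S.g_symm]; exact S.T_orth W V
  have key : ∀ X : VF, S.T X = X →
      S.g (S.conn X (S.T V)) X = S.g X X + S.g ν (S.secondFF X X) := by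
    intro X hX
    have hνX : S.g ν X = 0 := by
      have h := hgν' X
      rwa [hX] at h
    have h1 : S.g V X = S.g (S.T V) X := by
      conv_lhs => rw [hVsum]
      rw [S.g_add_left, hνX, add_zero]
    have hA := S.compat X V X
    rw [hV X hX, h1] at hA
    have hB := S.compat X (S.T V) X
    have hV2 : S.g V (S.conn X X) =
        S.g (S.T V) (S.conn X X) + S.g ν (S.conn X X) := by
      conv_lhs => rw [hVsum]
      rw [S.g_add_left]
    have hd : S.conn X X = S.T (S.conn X X) + S.secondFF X X := by
      simp [SubmanifoldVF.secondFF]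
    have hsplit : S.g ν (S.conn X X) =
        S.g ν (S.T (S.conn X X)) + S.g ν (S.secondFF X X) := by
      conv_lhs => rw [hd]
      rw [S.toRiemannianVF.g_add_right]
    funext p
    have hAp := congrFun hA p
    have hBp := congrFun hB p
    have hV2p := congrFun hV2 p
    have hsp := congrFun hsplit p
    have hz : S.g ν (S.T (S.conn X X)) p = 0 := by rw [hgν']; rfl
    simp only [Pi.add_apply] at hAp hBp hV2p hsp ⊢
    linarith
  intro p
  have main : ∀ i : Fin n, φ p = 1 + S.g ν (S.secondFF (e i) (e i)) p := by
    intro i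
    have hX := htang i
    set X := e i with hXdef
    have hsp := congrFun (hsol X X hX hX) p
    have hcp := congrFun (S.compat (S.T V) X X) p
    have hbr : S.g (S.bracket (S.T V) X) X =
        S.g (S.conn (S.T V) X) X - S.g (S.conn X (S.T V)) X := by
      rw [← S.torsion_free, S.toRiemannianVF.g_sub_left]
    have hbrp := congrFun hbr p
    have hbr2p := congrFun (S.g_symm X (S.bracket (S.T V) X)) p
    have hsymp := congrFun (S.g_symm X (S.conn (S.T V) X)) p
    have hkeyp := congrFun (key X hX) p
    have hgXX : S.g X X p = 1 := by
      have h := congrFun (he i i) p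
      simpa using h
    simp only [RiemannianVF.lieDeriv, Pi.sub_apply, Pi.add_apply] at hsp hcp hbrp hkeyp
    rw [hgXX] at hsp hkeyp
    linarith
  have hsum : ∑ i, S.g ν (S.secondFF (e i) (e i)) p = 0 := by
    have h := S.toRiemannianVF.g_sum_right ν Finset.univ
      (fun i => S.secondFF (e i) (e i))
    rw [hmin, S.toRiemannianVF.g_zero_right] at h
    have hp := congrFun h p
    simpa [Finset.sum_apply] using hp.symm
  have h1 : ∑ _i : Fin n, φ p = ∑ i : Fin n, (1 + S.g ν (S.secondFF (e i) (e i)) p) :=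
    Finset.sum_congr rfl fun i _ => main i
  rw [Finset.sum_add_distrib, hsum, add_zero] at h1
  simp only [Finset.sum_const, Finset.card_univ, Fintype.card_fin, nsmul_eq_mul,
    mul_one] at h1
  have hn' : (n : ℝ) ≠ 0 := Nat.cast_ne_zero.mpr (by omega)
  field_simp at h1
  exact h1
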